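/- Let p, m ≥ 1 be integers and let Q ∈ ℝ^{p×m} be a matrix with rank Q = p. If L, L̃ ∈ ℝ^{m×m} are lower unitriangular matrices and Q⁰ := QL and Q̃⁰ := QL̃ are both in canonical form, then Q⁰ = Q̃⁰. -/
import Mathlib


/-- A matrix `L` is lower unitriangular if `L i j = 0` whenever `i < j`
and `L i i = 1` for every `i`. -/
def IsLowerUnitriangular {m : ℕ} (L : Matrix (Fin m) (Fin m) ℝ) : Prop :=
  (∀ i j : Fin m, i < j → L i j = 0) ∧ ∀ i : Fin m, L i i = 1

/-- `Q` is in canonical form with witnessing (distinct) column indices `c 1, …, c p`: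
for every row `i`, the entry `Q i (c i)` is nonzero, the entries `Q i j` vanish
for `j > c i` with `j ∉ {c (i+1), …, c p}`, and the entries `Q i j` vanish
for `j < c i`. -/
def IsCanonicalFormWith {p m : ℕ} (Q : Matrix (Fin p) (Fin m) ℝ) (c : Fin p → Fin m) : Prop :=
  Function.Injective c ∧
    ∀ i : Fin p,
      Q i (c i) ≠ 0 ∧
      (∀ j : Fin m, c i < j → (∀ k : Fin p, i < k → j ≠ c k) → Q i j = 0) ∧
      (∀ j : Fin m, j < c i → Q i j = 0)

/-- `Q` is in canonical form. -/
def IsCanonicalForm {p m : ℕ} (Q : Matrix (Fin p) (Fin m) ℝ) : Prop :=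
  ∃ c : Fin p → Fin m, IsCanonicalFormWith Q c

open Finset

lemma lut_blockTri {m : ℕ} {L : Matrix (Fin m) (Fin m) ℝ} (hL : IsLowerUnitriangular L) :
    Matrix.BlockTriangular L OrderDual.toDual := fun i j hij => hL.1 i j hij

lemma lut_mul {m : ℕ} {X Y : Matrix (Fin m) (Fin m) ℝ} (hX : IsLowerUnitriangular X)
    (hY : IsLowerUnitriangular Y) : IsLowerUnitriangular (X * Y) := by
  constructor
  · intro i j hij
    rw [Matrix.mul_apply]
    apply Finset.sum_eq_zero
    intro k _
    rcases le_or_gt k i with hk | hk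
    · rw [hY.1 k j (lt_of_le_of_lt hk hij), mul_zero]
    · rw [hX.1 i k hk, zero_mul]
  · intro i
    rw [Matrix.mul_apply, Finset.sum_eq_single i]
    · rw [hX.2 i, hY.2 i, one_mul]
    · intro k _ hk
      rcases lt_or_gt_of_ne hk with hlt | hgt
      · rw [hY.1 k i hlt, mul_zero]
      · rw [hX.1 i k hgt, zero_mul]
    · intro hi; exact absurd (mem_univ i) hi

lemma lut_inv {m : ℕ} {X : Matrix (Fin m) (Fin m) ℝ} (hX : IsLowerUnitriangular X) :
    ∃ Y : Matrix (Fin m) (Fin m) ℝ, IsLowerUnitriangular Y ∧ X * Y = 1 := by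
  have hdet : X.det = 1 := by
    rw [Matrix.det_of_lowerTriangular X (lut_blockTri hX)]
    simp [hX.2]
  have hu : IsUnit X.det := by rw [hdet]; exact isUnit_one
  haveI : Invertible X := X.invertibleOfIsUnitDet hu
  have hlow : ∀ i j : Fin m, i < j → X⁻¹ i j = 0 :=
    fun i j hij => Matrix.blockTriangular_inv_of_blockTriangular (lut_blockTri hX) hij
  have hmul : X * X⁻¹ = 1 := Matrix.mul_nonsing_inv X hu
  refine ⟨X⁻¹, ⟨hlow, fun i => ?_⟩, hmul⟩
  have h1 : (X * X⁻¹) i i = 1 := by rw [hmul]; simp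
  rw [Matrix.mul_apply, Finset.sum_eq_single i] at h1
  · rwa [hX.2 i, one_mul] at h1
  · intro k _ hk
    rcases lt_or_gt_of_ne hk with hlt | hgt
    · rw [hlow k i hlt, mul_zero]
    · rw [hX.1 i k hgt, zero_mul]
  · intro hi; exact absurd (mem_univ i) hi

lemma canon_below {p m : ℕ} {X : Matrix (Fin p) (Fin m) ℝ} {c : Fin p → Fin m}
    (hc : IsCanonicalFormWith X c) {i r : Fin p} (h : i < r) : X r (c i) = 0 := by
  rcases lt_trichotomy (c i) (c r) with hlt | heq | hgt
  · exact (hc.2 r).2.2 (c i) hlt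
  · exact absurd (hc.1 heq) (ne_of_lt h)
  · refine (hc.2 r).2.1 (c i) hgt (fun k hk hek => ?_)
    have := hc.1 hek
    omega

lemma canon_nonpivot {p m : ℕ} {X : Matrix (Fin p) (Fin m) ℝ} {c : Fin p → Fin m}
    (hc : IsCanonicalFormWith X c) {j : Fin m} (hj : ∀ s : Fin p, j ≠ c s) (r : Fin p) :
    X r j = 0 := by
  rcases lt_trichotomy j (c r) with hlt | heq | hgt
  · exact (hc.2 r).2.2 j hlt
  · exact absurd heq (hj r)
  · exact (hc.2 r).2.1 j hgt (fun k _ => hj k)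

/-- Uniqueness part of the canonical UL-decomposition: if `Q` has full row rank and
`L`, `L̃` are lower unitriangular with both `Q * L` and `Q * L̃` in canonical form,
then `Q * L = Q * L̃`. -/
theorem canonical_UL_decomposition_unique {p m : ℕ} (hp : 1 ≤ p) (hm : 1 ≤ m)
    (Q : Matrix (Fin p) (Fin m) ℝ) (hQ : Q.rank = p)
    (L L' : Matrix (Fin m) (Fin m) ℝ)
    (hL : IsLowerUnitriangular L) (hL' : IsLowerUnitriangular L')
    (h : IsCanonicalForm (Q * L)) (h' : IsCanonicalForm (Q * L')) :
    Q * L = Q * L' := by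
  obtain ⟨c, hc⟩ := h
  obtain ⟨c', hc'⟩ := h'
  obtain ⟨I', hI', hLI'⟩ := lut_inv hL'
  have hN : IsLowerUnitriangular (I' * L) := lut_mul hI' hL
  have hBN : Q * L = (Q * L') * (I' * L) := by
    rw [Matrix.mul_assoc, ← Matrix.mul_assoc L' I' L, hLI', Matrix.one_mul]
  have key : ∀ n : ℕ, ∀ j : Fin m, m - (j : ℕ) ≤ n → ∀ r, (Q * L) r j = (Q * L') r j := by
    intro n
    induction n with
    | zero =>
      intro j hj
      exact absurd hj (by have := j.isLt; omega)
    | succ n ih =>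
      intro j hj
      have IH : ∀ d : Fin m, j < d → ∀ r, (Q * L) r d = (Q * L') r d := by
        intro d hd
        refine ih d ?_
        have := d.isLt
        have hd' : (j : ℕ) < d := hd
        omega
      have hexp : ∀ r, (Q * L) r j = (Q * L') r j
          + ∑ k ∈ univ.filter (fun k => j < k), (Q * L') r k * (I' * L) k j := by
        intro r
        have h1 : (Q * L) r j = ∑ k, (Q * L') r k * (I' * L) k j := by
          rw [hBN, Matrix.mul_apply]
        rw [h1]
        have h2 : ∑ k, (Q * L') r k * (I' * L) k j
            = ∑ k ∈ univ.filter (fun k => j ≤ k), (Q * L') r k * (I' * L) k j := by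
          symm
          apply Finset.sum_filter_of_ne
          intro k _ hk
          by_contra hkj
          push_neg at hkj
          exact hk (by rw [hN.1 k j hkj, mul_zero])
        have h3 : univ.filter (fun k : Fin m => j ≤ k)
            = insert j (univ.filter (fun k => j < k)) := by
          ext k
          simp only [mem_filter, mem_univ, true_and, mem_insert]
          omega
        rw [h2, h3, Finset.sum_insert (by simp), hN.2 j, mul_one]
      by_cases hS : ∀ s : Fin p, j < c' s → (I' * L) (c' s) j = 0
      · intro r
        rw [hexp r]
        have hz : ∑ k ∈ univ.filter (fun k => j < k), (Q * L') r k * (I' * L) k j = 0 := by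
          apply Finset.sum_eq_zero
          intro k hk
          rw [mem_filter] at hk
          by_cases hpiv : ∃ s, k = c' s
          · obtain ⟨s, rfl⟩ := hpiv
            rw [hS s hk.2, mul_zero]
          · push_neg at hpiv
            rw [canon_nonpivot hc' hpiv r, zero_mul]
        rw [hz, add_zero]
      · exfalso
        push_neg at hS
        obtain ⟨s0, hs0, hNs0⟩ := hS
        set T := univ.filter (fun s : Fin p => j < c' s ∧ (I' * L) (c' s) j ≠ 0) with hT
        have hTne : T.Nonempty := ⟨s0, by simp [hT, hs0, hNs0]⟩
        set K := T.max' hTne with hKdef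
        have hKT : K ∈ T := T.max'_mem hTne
        rw [hT, mem_filter] at hKT
        obtain ⟨-, hK1, hK2⟩ := hKT
        have hAKj : (Q * L) K j = (Q * L') K (c' K) * (I' * L) (c' K) j := by
          rw [hexp K, (hc'.2 K).2.2 j hK1, zero_add]
          apply Finset.sum_eq_single_of_mem (c' K) (by simp [hK1])
          intro k hk hne
          rw [mem_filter] at hk
          by_cases hpiv : ∃ s, k = c' s
          · obtain ⟨s, rfl⟩ := hpiv
            by_cases hz : (I' * L) (c' s) j = 0
            · rw [hz, mul_zero]
            · have hsT : s ∈ T := by simp [hT, hk.2, hz]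
              have hsK : s < K :=
                lt_of_le_of_ne (T.le_max' s hsT) (fun he => hne (by rw [he]))
              rw [canon_below hc' hsK, zero_mul]
          · push_neg at hpiv
            rw [canon_nonpivot hc' hpiv K, zero_mul]
        have hAne : (Q * L) K j ≠ 0 := by
          rw [hAKj]
          exact mul_ne_zero (hc'.2 K).1 hK2
        have hcol : ∀ r, (Q * L) r (c' K) = (Q * L') r (c' K) := IH (c' K) hK1
        have hpivA : ∃ s, c' K = c s := by
          by_contra hno
          push_neg at hno
          have h0 := canon_nonpivot hc hno K
          rw [hcol K] at h0
          exact (hc'.2 K).1 h0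
        obtain ⟨s, hs⟩ := hpivA
        rcases lt_trichotomy s K with hlt | heq | hgt
        · have h0 : (Q * L) K (c s) = 0 := canon_below hc hlt
          rw [← hs, hcol K] at h0
          exact (hc'.2 K).1 h0
        · have hjK : j < c K := by rw [← heq, ← hs]; exact hK1
          exact hAne ((hc.2 K).2.2 j hjK)
        · have h0 : (Q * L') s (c' K) = 0 := canon_below hc' hgt
          rw [← hcol s, hs] at h0
          exact (hc.2 s).1 h0
  ext r j
  exact key m j (by omega) r
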